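/- arXiv:1610.03784 — 2 statements merged into one kernel-verified Lean document; each statement's English description precedes it below -/
import Mathlib

section
/- Let μ be a Radon measure on ℝⁿ, B a Borel set, s ∈ [0,n], and t > 0. If for every x ∈ B one has limsup_{r→0⁺} μ(B_r(x)) / (ω_s r^s) ≥ t, then μ(B) ≥ t · H^s(B), where H^s denotes the s-dimensional Hausdorff measure and ω_s is the usual normalizing constant. -/
open MeasureTheory Metric Filter Set
open scoped ENNReal NNReal Topology

/-- The usual normalizing constant `ω_s = π^{s/2} / Γ(s/2 + 1)`. -/
noncomputable def omegaConst (s : ℝ) : ℝ := Real.pi ^ (s / 2) / Real.Gamma (s / 2 + 1)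

/-- The `s`-dimensional Hausdorff measure on `ℝⁿ`, normalized (with the constant `ω_s`)
so that `H^n` coincides with Lebesgue measure. -/
noncomputable def normHausdorff (n : ℕ) (s : ℝ) : Measure (EuclideanSpace ℝ (Fin n)) :=
  (ENNReal.ofReal (omegaConst s / 2 ^ s)) • (μH[s] : Measure (EuclideanSpace ℝ (Fin n)))

lemma omegaConst_pos {s : ℝ} (hs : 0 ≤ s) : 0 < omegaConst s := by
  have h1 : 0 < Real.Gamma (s / 2 + 1) := Real.Gamma_pos_of_pos (by linarith)
  have h2 : 0 < Real.pi ^ (s / 2) := Real.rpow_pos_of_pos Real.pi_pos _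
  exact div_pos h2 h1

lemma density_aux {X : Type*} [MetricSpace X] [MeasurableSpace X] [BorelSpace X]
    [SecondCountableTopology X] (μ : Measure X)
    (B U : Set X) (hU : IsOpen U) (hBU : B ⊆ U)
    {s t' : ℝ} (hs0 : 0 ≤ s) (ht' : 0 < t')
    (hdens : ∀ x ∈ B, ∀ ε > (0:ℝ), ∃ r, 0 < r ∧ r ≤ ε ∧
      ENNReal.ofReal (t' * (omegaConst s * r ^ s)) ≤ μ (ball x r)) :
    ENNReal.ofReal t' * (ENNReal.ofReal (omegaConst s / 2 ^ s) * μH[s] B) ≤ μ U := by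
  classical
  by_cases hμU : μ U = ∞
  · rw [hμU]; exact le_top
  have hωpos : 0 < omegaConst s := omegaConst_pos hs0
  set ω : ℝ := omegaConst s with hωdef
  set c : ℝ≥0∞ := ENNReal.ofReal (t' * ω) with hc
  have hc0 : c ≠ 0 := (ENNReal.ofReal_pos.2 (by positivity)).ne'
  have hct : c ≠ ∞ := ENNReal.ofReal_ne_top
  set K : ℝ≥0∞ := μ U / c with hK
  have hKlt : K < ∞ := ENNReal.div_lt_top hμU hc0
  have h2s : (0:ℝ) < 2 ^ s := Real.rpow_pos_of_pos two_pos s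
  have h2of : ∀ r' : ℝ, 2 * ENNReal.ofReal r' = ENNReal.ofReal (2 * r') := by
    intro r'
    rw [ENNReal.ofReal_mul (by norm_num : (0:ℝ) ≤ 2), ENNReal.ofReal_ofNat]
  -- Main claim
  have hH : μH[s] B ≤ ENNReal.ofReal (2 ^ s) * K := by
    rw [MeasureTheory.Measure.hausdorffMeasure_apply]
    refine iSup₂_le fun ρ hρ => ?_
    -- choose δ
    obtain ⟨δ, hδ0, hδρ⟩ : ∃ δ : ℝ, 0 < δ ∧ ENNReal.ofReal (6 * δ) ≤ ρ := by
      rcases eq_or_ne ρ ∞ with h | h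
      · exact ⟨1, one_pos, by simp [h]⟩
      · have hρ0 : 0 < ρ.toReal := ENNReal.toReal_pos hρ.ne' h
        refine ⟨ρ.toReal / 7, by positivity, ?_⟩
        calc ENNReal.ofReal (6 * (ρ.toReal / 7)) ≤ ENNReal.ofReal ρ.toReal :=
              ENNReal.ofReal_le_ofReal (by linarith)
          _ = ρ := ENNReal.ofReal_toReal h
    set T : Set (X × ℝ) := {p | p.1 ∈ B ∧ 0 < p.2 ∧ p.2 ≤ δ ∧ closedBall p.1 p.2 ⊆ U ∧
      ENNReal.ofReal (t' * (ω * p.2 ^ s)) ≤ μ (ball p.1 p.2)} with hT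
    have hfine : ∀ x ∈ B, ∀ ε > (0:ℝ), ∃ r, 0 < r ∧ r ≤ ε ∧ (x, r) ∈ T := by
      intro x hx ε hε
      obtain ⟨ρ₀, hρ₀pos, hρ₀U⟩ : ∃ ρ₀ > (0:ℝ), closedBall x ρ₀ ⊆ U :=
        (Metric.nhds_basis_closedBall.mem_iff).1 (hU.mem_nhds (hBU hx))
      obtain ⟨r, hr0, hrle, hμr⟩ := hdens x hx (min δ (min ε ρ₀)) (by positivity)
      have h1 : r ≤ δ := hrle.trans (min_le_left _ _)
      have h2 : r ≤ ε := hrle.trans ((min_le_right _ _).trans (min_le_left _ _))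
      have h3 : r ≤ ρ₀ := hrle.trans ((min_le_right _ _).trans (min_le_right _ _))
      exact ⟨r, hr0, h2, hx, hr0, h1,
        (closedBall_subset_closedBall h3).trans hρ₀U, hμr⟩
    obtain ⟨u, huT, hdisj, hcov⟩ :=
      Vitali.exists_disjoint_subfamily_covering_enlargement
        (fun p : X × ℝ => closedBall p.1 p.2) T (fun p => p.2) 2 one_lt_two
        (fun a ha => ha.2.1.le) δ (fun a ha => ha.2.2.1)
        (fun a ha => (nonempty_closedBall).2 ha.2.1.le)
    have hucnt : u.Countable :=
      hdisj.countable_of_nonempty_interior fun p hp =>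
        ((nonempty_ball.2 (huT hp).2.1).mono ball_subset_interior_closedBall)
    haveI : Encodable u := hucnt.toEncodable
    set M : u → ℝ≥0∞ := fun b => ENNReal.ofReal ((b : X × ℝ).2 ^ s) with hM
    have hrpos : ∀ b : u, 0 < (b : X × ℝ).2 := fun b => (huT b.2).2.1
    have hcM : ∀ b : u, c * M b = ENNReal.ofReal (t' * (ω * (b : X × ℝ).2 ^ s)) := by
      intro b
      rw [hM, hc, ← ENNReal.ofReal_mul (by positivity), mul_assoc]
    have hsum : c * ∑' b : u, M b ≤ μ U := by
      rw [← ENNReal.tsum_mul_left]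
      calc ∑' b : u, c * M b ≤ ∑' b : u, μ (ball (b : X × ℝ).1 (b : X × ℝ).2) := by
            refine ENNReal.tsum_le_tsum fun b => ?_
            rw [hcM b]; exact (huT b.2).2.2.2.2
        _ = μ (⋃ b ∈ u, ball (b : X × ℝ).1 (b : X × ℝ).2) := by
            refine (measure_biUnion hucnt ?_ fun b _ => measurableSet_ball).symm
            exact hdisj.mono fun p => ball_subset_closedBall
        _ ≤ μ U := by
            refine measure_mono (iUnion₂_subset fun b hb => ?_)
            exact ball_subset_closedBall.trans (huT hb).2.2.2.1
    have hMK : ∑' b : u, M b ≤ K :=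
      (ENNReal.le_div_iff_mul_le (Or.inl hc0) (Or.inl hct)).2 (by rw [mul_comm]; exact hsum)
    refine ENNReal.le_of_forall_pos_le_add fun η hη _ => ?_
    have htail := ENNReal.tendsto_tsum_compl_atTop_zero
      (f := fun b : u => ENNReal.ofReal (6 ^ s) * M b)
      (by
        rw [ENNReal.tsum_mul_left]
        exact (ENNReal.mul_lt_top ENNReal.ofReal_lt_top (hMK.trans_lt hKlt)).ne)
    obtain ⟨w, hw⟩ : ∃ w : Finset u,
        ∑' b : {x : u // x ∉ w}, (ENNReal.ofReal (6 ^ s) * M b) ≤ (η : ℝ≥0∞) := by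
      have := (htail.eventually_lt_const (by exact_mod_cast hη : (0:ℝ≥0∞) < η)).exists
      obtain ⟨w, hw⟩ := this
      exact ⟨w, hw.le⟩
    set G : u → Set X := fun b =>
      if b ∈ w then closedBall (b : X × ℝ).1 (b : X × ℝ).2
      else closedBall (b : X × ℝ).1 (3 * (b : X × ℝ).2) with hG
    set tc : ℕ → Set X := fun k => (Encodable.decode₂ u k).elim ∅ G with htc
    have htcenc : ∀ b : u, tc (Encodable.encode b) = G b := by
      intro b; simp [htc, Encodable.decode₂_encode]
    have hcover : B ⊆ ⋃ k, tc k := by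
      intro x hx
      suffices h : ∃ b : u, x ∈ G b by
        obtain ⟨b, hb⟩ := h
        exact mem_iUnion.2 ⟨Encodable.encode b, by rw [htcenc b]; exact hb⟩
      by_cases hxw : ∃ b ∈ w, x ∈ closedBall (b : X × ℝ).1 (b : X × ℝ).2
      · obtain ⟨b, hbw, hxb⟩ := hxw
        exact ⟨b, by rw [hG]; simpa [hbw] using hxb⟩
      · push_neg at hxw
        set W : Set X := ⋃ b ∈ w, closedBall (b : X × ℝ).1 (b : X × ℝ).2 with hW
        have hWc : IsClosed W :=
          w.finite_toSet.isClosed_biUnion fun _ _ => isClosed_closedBall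
        have hxW : x ∉ W := by
          rw [hW]; simp only [mem_iUnion]; rintro ⟨b, hb, hxb⟩; exact hxw b hb hxb
        obtain ⟨ε, hε, hballW⟩ : ∃ ε > (0:ℝ), ball x ε ⊆ Wᶜ :=
          Metric.mem_nhds_iff.1 (hWc.isOpen_compl.mem_nhds hxW)
        obtain ⟨r, hr0, hrε, hrT⟩ := hfine x hx (ε / 2) (half_pos hε)
        obtain ⟨b, hbu, hne, hrle⟩ := hcov (x, r) hrT
        obtain ⟨y, hy1, hy2⟩ := hne
        have hrb0 : 0 < b.2 := (huT hbu).2.1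
        have hbw : (⟨b, hbu⟩ : u) ∉ w := by
          intro hmem
          have hyW : y ∈ W := by
            rw [hW]; exact mem_biUnion hmem hy2
          have hyB : y ∈ ball x ε := by
            rw [mem_ball, dist_comm]
            calc dist x y ≤ r := by simpa [dist_comm] using mem_closedBall.1 hy1
              _ < ε := by linarith
          exact hballW hyB hyW
        refine ⟨⟨b, hbu⟩, ?_⟩
        rw [hG]
        simp only [if_neg hbw]
        rw [mem_closedBall]
        have h1 : dist x y ≤ r := by simpa [dist_comm] using mem_closedBall.1 hy1
        have h2 : dist y b.1 ≤ b.2 := mem_closedBall.1 hy2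
        have h3 : r ≤ 2 * b.2 := by simpa using hrle
        calc dist x b.1 ≤ dist x y + dist y b.1 := dist_triangle _ _ _
          _ ≤ 3 * b.2 := by linarith
    have key : ∀ (x : X) (r' : ℝ), 0 ≤ r' → r' ≤ 3 * δ →
        Metric.ediam (closedBall x r') ≤ ENNReal.ofReal (6 * δ) := by
      intro x r' h0 h3
      calc Metric.ediam (closedBall x r')
          ≤ 2 * ENNReal.ofReal r' := by
            rw [← Metric.emetric_closedBall h0]
            exact EMetric.diam_closedBall
        _ = ENNReal.ofReal (2 * r') := h2of r'
        _ ≤ ENNReal.ofReal (6 * δ) := ENNReal.ofReal_le_ofReal (by linarith)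
    have hdiamG : ∀ b : u, Metric.ediam (G b) ≤ ENNReal.ofReal (6 * δ) := by
      intro b
      have hrδ : (b : X × ℝ).2 ≤ δ := (huT b.2).2.2.1
      have hrb0 := (hrpos b).le
      rw [hG]
      by_cases hb : b ∈ w
      · simp only [if_pos hb]; exact key _ _ hrb0 (by linarith)
      · simp only [if_neg hb]; exact key _ _ (by linarith) (by linarith)
    have hdiam : ∀ k, Metric.ediam (tc k) ≤ ρ := by
      intro k
      have : tc k = (Encodable.decode₂ u k).elim ∅ G := by rw [htc]
      rw [this]
      cases Encodable.decode₂ u k with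
      | none => simp
      | some b => simpa using (hdiamG b).trans hδρ
    refine le_trans (iInf_le_of_le tc (iInf_le_of_le hcover (iInf_le_of_le hdiam le_rfl))) ?_
    -- bound the sum
    have hsupp : Function.support
        (fun k => ⨆ _ : (tc k).Nonempty, Metric.ediam (tc k) ^ s) ⊆
        Set.range (Encodable.encode (α := ↥u)) := by
      intro k hk
      rw [Function.mem_support] at hk
      by_contra hk2
      rw [← Encodable.decode₂_ne_none_iff] at hk2
      push_neg at hk2
      apply hk
      have htck : tc k = ∅ := by rw [htc]; simp [hk2]
      simp [htck, Set.not_nonempty_empty]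
    have hre := Function.Injective.tsum_eq (g := Encodable.encode (α := ↥u))
      Encodable.encode_injective hsupp
    rw [← hre]
    have hre2 : (∑' b : u, ⨆ _ : (tc (Encodable.encode b)).Nonempty,
          Metric.ediam (tc (Encodable.encode b)) ^ s)
        = ∑' b : u, ⨆ _ : (G b).Nonempty, Metric.ediam (G b) ^ s :=
      tsum_congr fun b => by rw [htcenc b]
    rw [hre2]
    have hGbound : ∀ b : u, (⨆ _ : (G b).Nonempty, Metric.ediam (G b) ^ s)
        ≤ ENNReal.ofReal (2 ^ s) * M b
          + (if b ∈ w then 0 else ENNReal.ofReal (6 ^ s) * M b) := by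
      intro b
      refine iSup_le fun _ => ?_
      have hr0 : (0:ℝ) < (b : X × ℝ).2 := hrpos b
      by_cases hb : b ∈ w
      · rw [hG]
        simp only [if_pos hb]
        calc Metric.ediam (closedBall (b : X × ℝ).1 (b : X × ℝ).2) ^ s
            ≤ (ENNReal.ofReal (2 * (b : X × ℝ).2)) ^ s := by
              refine ENNReal.rpow_le_rpow ?_ hs0
              rw [← Metric.emetric_closedBall hr0.le]
              exact le_trans EMetric.diam_closedBall (le_of_eq (h2of _))
          _ = ENNReal.ofReal ((2 * (b : X × ℝ).2) ^ s) :=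
              ENNReal.ofReal_rpow_of_pos (by linarith)
          _ = ENNReal.ofReal (2 ^ s) * M b := by
              rw [Real.mul_rpow (by norm_num) hr0.le, ENNReal.ofReal_mul (by positivity), hM]
          _ ≤ _ := le_self_add
      · rw [hG]
        simp only [if_neg hb]
        calc Metric.ediam (closedBall (b : X × ℝ).1 (3 * (b : X × ℝ).2)) ^ s
            ≤ (ENNReal.ofReal (2 * (3 * (b : X × ℝ).2))) ^ s := by
              refine ENNReal.rpow_le_rpow ?_ hs0
              rw [← Metric.emetric_closedBall (by linarith)]
              exact le_trans EMetric.diam_closedBall (le_of_eq (h2of _))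
          _ = ENNReal.ofReal ((6 * (b : X × ℝ).2) ^ s) := by
              rw [show (2:ℝ) * (3 * (b : X × ℝ).2) = 6 * (b : X × ℝ).2 by ring]
              exact ENNReal.ofReal_rpow_of_pos (by linarith)
          _ = ENNReal.ofReal (6 ^ s) * M b := by
              rw [Real.mul_rpow (by norm_num) hr0.le, ENNReal.ofReal_mul (by positivity), hM]
          _ ≤ _ := le_add_self
    calc (∑' b : u, ⨆ _ : (G b).Nonempty, Metric.ediam (G b) ^ s)
        ≤ ∑' b : u, (ENNReal.ofReal (2 ^ s) * M b
            + (if b ∈ w then 0 else ENNReal.ofReal (6 ^ s) * M b)) :=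
          ENNReal.tsum_le_tsum hGbound
      _ = ENNReal.ofReal (2 ^ s) * (∑' b : u, M b)
          + ∑' b : u, (if b ∈ w then 0 else ENNReal.ofReal (6 ^ s) * M b) := by
          rw [ENNReal.tsum_add, ENNReal.tsum_mul_left]
      _ ≤ ENNReal.ofReal (2 ^ s) * K + (η : ℝ≥0∞) := by
          refine add_le_add (mul_le_mul_right hMK _) ?_
          refine le_trans (le_of_eq ?_) hw
          calc (∑' b : u, if b ∈ w then 0 else ENNReal.ofReal (6 ^ s) * M b)
              = ∑' b : u, Set.indicator ((↑w : Set ↑u))ᶜ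
                  (fun b => ENNReal.ofReal (6 ^ s) * M b) b :=
                tsum_congr fun b => by
                  by_cases hb : b ∈ w <;> simp [Set.indicator_apply, hb]
            _ = ∑' b : ↥((↑w : Set ↑u)ᶜ), ENNReal.ofReal (6 ^ s) * M ↑b :=
                (tsum_subtype _ _).symm
            _ = ∑' b : {x : u // x ∉ w}, ENNReal.ofReal (6 ^ s) * M ↑b := rfl
  -- conclude
  calc ENNReal.ofReal t' * (ENNReal.ofReal (ω / 2 ^ s) * μH[s] B)
      ≤ ENNReal.ofReal t' * (ENNReal.ofReal (ω / 2 ^ s) * (ENNReal.ofReal (2 ^ s) * K)) := by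
        exact mul_le_mul_right (mul_le_mul_right hH _) _
    _ = c * K := by
        rw [← mul_assoc (ENNReal.ofReal (ω / 2 ^ s)), ← ENNReal.ofReal_mul (by positivity),
          div_mul_cancel₀ _ h2s.ne', ← mul_assoc, ← ENNReal.ofReal_mul ht'.le, hc]
    _ = μ U := ENNReal.mul_div_cancel hc0 hct

/-- Density estimate: if a Radon measure `μ` has `s`-dimensional upper density at least `t`
at every point of a Borel set `B`, then `μ B ≥ t · H^s(B)`. -/
theorem density_lower_estimate {n : ℕ} (μ : Measure (EuclideanSpace ℝ (Fin n)))
    [μ.Regular] (B : Set (EuclideanSpace ℝ (Fin n))) (hB : MeasurableSet B)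
    (s t : ℝ) (hs0 : 0 ≤ s) (hsn : s ≤ n) (ht : 0 < t)
    (hdens : ∀ x ∈ B, ENNReal.ofReal t ≤
      Filter.limsup
        (fun r : ℝ => μ (ball x r) / ENNReal.ofReal (omegaConst s * r ^ s))
        (nhdsWithin 0 (Set.Ioi 0))) :
    ENNReal.ofReal t * normHausdorff n s B ≤ μ B := by
  have hν : ∀ A : Set (EuclideanSpace ℝ (Fin n)), normHausdorff n s A
      = ENNReal.ofReal (omegaConst s / 2 ^ s) * μH[s] A := by
    intro A; rw [normHausdorff, Measure.smul_apply, smul_eq_mul]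
  have H : ∀ t' : ℝ, 0 < t' → t' < t →
      ENNReal.ofReal t' * normHausdorff n s B ≤ μ B := by
    intro t' ht'0 ht't
    rw [Set.measure_eq_iInf_isOpen B μ]
    refine le_iInf fun U => le_iInf fun hBU => le_iInf fun hUopen => ?_
    rw [hν]
    refine density_aux μ B U hUopen hBU hs0 ht'0 ?_
    intro x hx ε hε
    have h1 : ENNReal.ofReal t' <
        Filter.limsup
          (fun r : ℝ => μ (ball x r) / ENNReal.ofReal (omegaConst s * r ^ s))
          (nhdsWithin 0 (Set.Ioi 0)) :=
      lt_of_lt_of_le ((ENNReal.ofReal_lt_ofReal_iff ht).2 ht't) (hdens x hx)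
    have h2 : ∃ᶠ r in nhdsWithin (0:ℝ) (Set.Ioi 0), ENNReal.ofReal t' <
        μ (ball x r) / ENNReal.ofReal (omegaConst s * r ^ s) :=
      Filter.frequently_lt_of_lt_limsup (by isBoundedDefault) h1
    have h3 : ∀ᶠ r in nhdsWithin (0:ℝ) (Set.Ioi 0), r ∈ Set.Ioc 0 ε :=
      Ioc_mem_nhdsGT hε
    obtain ⟨r, hlt, hr0, hrε⟩ := (h2.and_eventually h3).exists
    refine ⟨r, hr0, hrε, ?_⟩
    have hωpos : 0 < omegaConst s := omegaConst_pos hs0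
    have hrs : 0 < r ^ s := Real.rpow_pos_of_pos hr0 s
    have hd0 : ENNReal.ofReal (omegaConst s * r ^ s) ≠ 0 :=
      (ENNReal.ofReal_pos.2 (by positivity)).ne'
    have hdt : ENNReal.ofReal (omegaConst s * r ^ s) ≠ ⊤ := ENNReal.ofReal_ne_top
    have := (ENNReal.le_div_iff_mul_le (Or.inl hd0) (Or.inl hdt)).1 hlt.le
    rwa [ENNReal.ofReal_mul ht'0.le]
  by_cases hνB : normHausdorff n s B = ⊤
  · have h2 := H (t / 2) (half_pos ht) (half_lt_self ht)
    rw [hνB, ENNReal.mul_top (ENNReal.ofReal_pos.2 (half_pos ht)).ne'] at h2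
    exact le_top.trans_eq (top_le_iff.1 h2).symm
  · have hlim : Filter.Tendsto
        (fun k : ℕ => ENNReal.ofReal (t - t / (k + 2)) * normHausdorff n s B)
        atTop (nhds (ENNReal.ofReal t * normHausdorff n s B)) := by
      have hreal : Filter.Tendsto (fun k : ℕ => t - t / (k + 2)) atTop (nhds t) := by
        have h0 : Filter.Tendsto (fun k : ℕ => t / ((k : ℝ) + 2)) atTop (nhds 0) := by
          have := (tendsto_const_div_atTop_nhds_zero_nat t).comp
            (tendsto_add_atTop_nat 2)
          refine this.congr fun a => ?_
          simp only [Function.comp]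
          push_cast
          ring
        simpa using tendsto_const_nhds.sub h0
      exact ENNReal.Tendsto.mul_const
        ((ENNReal.continuous_ofReal.tendsto t).comp hreal) (Or.inr hνB)
    refine le_of_tendsto' hlim fun k => ?_
    have hk2 : (0:ℝ) < (k : ℝ) + 2 := by positivity
    have h1 : (0:ℝ) < t - t / (k + 2) := by
      rw [sub_pos, div_lt_iff₀ hk2]
      nlinarith
    have h2 : t - t / (k + 2) < t := by
      have : 0 < t / ((k:ℝ) + 2) := by positivity
      linarith
    exact H _ h1 h2
end

section
/- Let α ∈ (0,1/2), δ > 0, and let K ⊂ ℝⁿ be a bounded (α,δ)-porous set, i.e. for every x ∈ ℝⁿ and every ρ ∈ (0,δ) there exist y and r ∈ (αρ, ρ) with B_r(y) ⊂ B_ρ(x) \ K. Then there exist constants C = C(n,δ,diam K) > 0 and γ = γ(α,n) < n such that Lⁿ((K)_r) ≤ C r^{n-γ} for all r ∈ (0, diam K). In particular the Hausdorff dimension of K is at most γ < n. -/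
open MeasureTheory Metric Set
open scoped ENNReal

/-- `K` is `(α,δ)`-porous: every ball `B_ρ(x)` with `ρ ∈ (0,δ)` contains a sub-ball
`B_r(y)` with `r ∈ (αρ, ρ)` disjoint from `K`. -/
def IsPorous {n : ℕ} (α δ : ℝ) (K : Set (EuclideanSpace ℝ (Fin n))) : Prop :=
  ∀ x : EuclideanSpace ℝ (Fin n), ∀ ρ : ℝ, 0 < ρ → ρ < δ →
    ∃ (y : EuclideanSpace ℝ (Fin n)) (r : ℝ),
      α * ρ < r ∧ r < ρ ∧ ball y r ⊆ ball x ρ \ K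

namespace PorousAux
variable {n : ℕ}

def box (a b : Fin n → ℝ) : Set (EuclideanSpace ℝ (Fin n)) :=
  {x | ∀ i, a i ≤ x i ∧ x i < b i}

def cube (s : ℝ) (z : Fin n → ℤ) : Set (EuclideanSpace ℝ (Fin n)) :=
  box (fun i => (z i : ℝ) * s) (fun i => ((z i : ℝ) + 1) * s)

lemma mem_cube_iff {s : ℝ} (hs : 0 < s) {z : Fin n → ℤ} {x : EuclideanSpace ℝ (Fin n)} :
    x ∈ cube s z ↔ ∀ i, ⌊x i / s⌋ = z i := by
  unfold cube box
  simp only [Set.mem_setOf_eq]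
  refine forall_congr' fun i => ?_
  rw [Int.floor_eq_iff, le_div_iff₀ hs, div_lt_iff₀ hs]

lemma self_mem_cube {s : ℝ} (hs : 0 < s) (x : EuclideanSpace ℝ (Fin n)) :
    x ∈ cube s (fun i => ⌊x i / s⌋) := (mem_cube_iff hs).2 fun _ => rfl

lemma coord_le_norm (x : EuclideanSpace ℝ (Fin n)) (i : Fin n) : |x i| ≤ ‖x‖ := by
  rw [EuclideanSpace.norm_eq]
  refine le_trans ?_ (Real.sqrt_le_sqrt (Finset.single_le_sum (f := fun j => ‖x j‖^2)
    (fun j _ => sq_nonneg _) (Finset.mem_univ i)))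
  rw [Real.sqrt_sq_eq_abs]
  simp [abs_abs, Real.norm_eq_abs]

lemma floor_child {s : ℝ} (hs : 0 < s) {k : ℕ} (hk : 0 < k) (t : ℝ) :
    (k : ℤ) * ⌊t / s⌋ ≤ ⌊t / (s / k)⌋ ∧ ⌊t / (s / k)⌋ < (k : ℤ) * ⌊t / s⌋ + k := by
  have h0 : (0 : ℝ) < (k : ℝ) := by exact_mod_cast hk
  have hu : t / (s / k) = t / s * k := by field_simp
  have h1 : (⌊t / s⌋ : ℝ) ≤ t / s := Int.floor_le _
  have h2 : t / s < ⌊t / s⌋ + 1 := Int.lt_floor_add_one _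
  constructor
  · rw [Int.le_floor]; push_cast; rw [hu]; nlinarith
  · rw [Int.floor_lt]; push_cast; rw [hu]; nlinarith

lemma dist_le_of_mem_cube {s' : ℝ} (hs' : 0 < s') {w : Fin n → ℤ}
    {x y : EuclideanSpace ℝ (Fin n)} (hx : x ∈ cube s' w) (hy : y ∈ cube s' w) :
    dist x y ≤ Real.sqrt n * s' := by
  rw [EuclideanSpace.dist_eq]
  have hcoord : ∀ i, dist (x i) (y i) ≤ s' := by
    intro i
    obtain ⟨hx1, hx2⟩ := hx i; obtain ⟨hy1, hy2⟩ := hy i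
    rw [Real.dist_eq, abs_le]
    dsimp only at *
    constructor <;> nlinarith
  calc Real.sqrt (∑ i, dist (x i) (y i) ^ 2) ≤ Real.sqrt (∑ _i : Fin n, s' ^ 2) := by
        apply Real.sqrt_le_sqrt
        exact Finset.sum_le_sum fun i _ => pow_le_pow_left₀ dist_nonneg (hcoord i) 2
  _ = Real.sqrt (n * s' ^ 2) := by simp [Finset.sum_const, Finset.card_univ]
  _ = Real.sqrt n * s' := by
        rw [Real.sqrt_mul (by positivity), Real.sqrt_sq hs'.le]

def idx (K : Set (EuclideanSpace ℝ (Fin n))) (s : ℝ) : Set (Fin n → ℤ) :=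
  {z | (cube s z ∩ K).Nonempty}

lemma exists_empty_child {α δ : ℝ} {K : Set (EuclideanSpace ℝ (Fin n))}
    (hα : 0 < α) (hP : IsPorous α δ K) {k : ℕ} (hk : 0 < k)
    (hk2 : 2 * Real.sqrt n ≤ α * k) {s : ℝ} (hs : 0 < s) (hsδ : s < 2 * δ)
    (z : Fin n → ℤ) :
    ∃ w : Fin n → ℤ, (∀ i, (k : ℤ) * z i ≤ w i ∧ w i < (k : ℤ) * z i + k) ∧
      cube (s / k) w ∩ K = ∅ := by
  have hk0 : (0 : ℝ) < (k : ℝ) := by exact_mod_cast hk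
  set c : EuclideanSpace ℝ (Fin n) := WithLp.toLp 2 (fun i => ((z i : ℝ) + 1 / 2) * s) with hc
  obtain ⟨y, r, hr1, hr2, hsub⟩ := hP c (s / 2) (by positivity) (by linarith)
  have hr0 : 0 < r := lt_trans (by positivity) hr1
  have hs' : (0 : ℝ) < s / k := by positivity
  have hyball : y ∈ ball c (s / 2) := (hsub (mem_ball_self hr0)).1
  have hyc : ∀ i, |y i - c i| < s / 2 := by
    intro i
    have h1 := coord_le_norm (y - c) i
    have h2 : ‖y - c‖ < s / 2 := by rwa [mem_ball, dist_eq_norm] at hyball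
    have : (y - c) i = y i - c i := rfl
    rw [this] at h1; linarith
  have hy_cube : ∀ i, ⌊y i / s⌋ = z i := by
    intro i
    have h := hyc i
    rw [abs_lt] at h
    have hci : c i = ((z i : ℝ) + 1 / 2) * s := rfl
    rw [Int.floor_eq_iff, le_div_iff₀ hs, div_lt_iff₀ hs]
    constructor <;> push_cast <;> nlinarith [h.1, h.2]
  refine ⟨fun i => ⌊y i / (s / k)⌋, fun i => ?_, ?_⟩
  · have h := floor_child hs hk (y i)
    rw [hy_cube i] at h
    exact h
  · have hsubball : cube (s / k) (fun i => ⌊y i / (s / k)⌋) ⊆ ball y r := by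
      intro x hx
      have hd : dist x y ≤ Real.sqrt n * (s / k) :=
        dist_le_of_mem_cube hs' hx (self_mem_cube hs' y)
      have hlt : Real.sqrt n * (s / k) < r := by
        have : Real.sqrt n * (s / k) ≤ α * (s / 2) := by
          rw [mul_div_assoc', mul_div_assoc', div_le_div_iff₀ hk0 (by norm_num : (0:ℝ) < 2)]
          nlinarith [mul_nonneg (sub_nonneg.2 hk2) hs.le]
        linarith
      exact mem_ball.2 (lt_of_le_of_lt hd hlt)
    have : cube (s / k) (fun i => ⌊y i / (s / k)⌋) ⊆ (ball c (s/2) \ K) :=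
      fun x hx => hsub (hsubball hx)
    rw [Set.eq_empty_iff_forall_notMem]
    rintro x ⟨hx1, hx2⟩
    exact (this hx1).2 hx2


lemma card_step {α δ : ℝ} {K : Set (EuclideanSpace ℝ (Fin n))}
    (hα : 0 < α) (hP : IsPorous α δ K) {k : ℕ} (hk : 0 < k)
    (hk2 : 2 * Real.sqrt n ≤ α * k) {s : ℝ} (hs : 0 < s) (hsδ : s < 2 * δ)
    (hf : (idx K s).Finite) (hf' : (idx K (s / k)).Finite) :
    (idx K (s / k)).ncard ≤ (k ^ n - 1) * (idx K s).ncard := by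
  classical
  have hs' : (0 : ℝ) < s / k := by positivity
  choose w₀ hw₀1 hw₀2 using exists_empty_child hα hP hk hk2 hs hsδ
  set ch : (Fin n → ℤ) → Finset (Fin n → ℤ) :=
    fun z => Fintype.piFinset fun i => Finset.Ico ((k : ℤ) * z i) ((k : ℤ) * z i + k) with hch
  have hw₀mem : ∀ z, w₀ z ∈ ch z := by
    intro z
    rw [hch, Fintype.mem_piFinset]
    intro i
    rw [Finset.mem_Ico]
    exact hw₀1 z i
  have hchcard : ∀ z, (ch z).card = k ^ n := by
    intro z
    rw [hch, Fintype.card_piFinset]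
    simp [Int.card_Ico]
  have hAB : hf'.toFinset ⊆ hf.toFinset.biUnion fun z => (ch z).erase (w₀ z) := by
    intro w hw
    rw [Set.Finite.mem_toFinset] at hw
    obtain ⟨x, hxw, hxK⟩ := hw
    have hw_eq : ∀ i, ⌊x i / (s / k)⌋ = w i := (mem_cube_iff hs').1 hxw
    set z : Fin n → ℤ := fun i => ⌊x i / s⌋ with hz
    have hzB : z ∈ hf.toFinset := by
      rw [Set.Finite.mem_toFinset]; exact ⟨x, self_mem_cube hs x, hxK⟩
    refine Finset.mem_biUnion.2 ⟨z, hzB, Finset.mem_erase.2 ⟨?_, ?_⟩⟩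
    · intro hcontr
      have hne : (cube (s / k) w ∩ K).Nonempty := ⟨x, hxw, hxK⟩
      rw [hcontr] at hne
      rw [hw₀2 z] at hne
      exact Set.not_nonempty_empty hne
    · rw [hch, Fintype.mem_piFinset]
      intro i
      rw [Finset.mem_Ico, ← hw_eq i]
      exact floor_child hs hk (x i)
  calc (idx K (s / k)).ncard = hf'.toFinset.card := Set.ncard_eq_toFinset_card _ hf'
  _ ≤ (hf.toFinset.biUnion fun z => (ch z).erase (w₀ z)).card := Finset.card_le_card hAB
  _ ≤ ∑ z ∈ hf.toFinset, ((ch z).erase (w₀ z)).card := Finset.card_biUnion_le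
  _ ≤ ∑ _z ∈ hf.toFinset, (k ^ n - 1) := by
      refine Finset.sum_le_sum fun z _ => ?_
      rw [Finset.card_erase_of_mem (hw₀mem z), hchcard z]
  _ = (idx K s).ncard * (k ^ n - 1) := by
      rw [Finset.sum_const, smul_eq_mul, Set.ncard_eq_toFinset_card _ hf]
  _ = (k ^ n - 1) * (idx K s).ncard := mul_comm _ _


lemma volume_box (a b : Fin n → ℝ) :
    volume (box a b) = ∏ i, ENNReal.ofReal (b i - a i) := by
  have h : box a b = (@WithLp.ofLp 2 (Fin n → ℝ)) ⁻¹'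
      (Set.univ.pi fun i => Set.Ico (a i) (b i)) := by
    ext x; simp [box, Set.mem_pi, Set.mem_Ico]
  rw [h, (PiLp.volume_preserving_ofLp (Fin n)).measure_preimage
    ((MeasurableSet.univ_pi fun i => measurableSet_Ico).nullMeasurableSet)]
  rw [volume_pi_pi]
  simp [Real.volume_Ico]

lemma idx_finite {K : Set (EuclideanSpace ℝ (Fin n))} {R s : ℝ} (hs : 0 < s)
    (hK : K ⊆ closedBall 0 R) : (idx K s).Finite := by
  have hsub : idx K s ⊆ Set.univ.pi fun _ : Fin n => Set.Icc (⌊-(R / s)⌋ - 1) ⌈R / s⌉ := by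
    rintro z ⟨x, hx, hxK⟩ i -
    have hxi : |x i| ≤ R := by
      have h1 := coord_le_norm x i
      have hn : ‖x‖ ≤ R := by simpa [Metric.mem_closedBall] using hK hxK
      linarith
    rw [abs_le] at hxi
    obtain ⟨h1, h2⟩ := hx i
    simp only [Set.mem_Icc]
    constructor
    · have hlt : (⌊-(R / s)⌋ : ℝ) < (z i : ℝ) + 1 := by
        calc (⌊-(R / s)⌋ : ℝ) ≤ -(R / s) := Int.floor_le _
        _ = (-R) / s := by rw [neg_div]
        _ ≤ x i / s := by gcongr; linarith [hxi.1]
        _ < (z i : ℝ) + 1 := by rw [div_lt_iff₀ hs]; exact h2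
      have : ⌊-(R / s)⌋ < z i + 1 := by exact_mod_cast hlt
      omega
    · have hle : (z i : ℝ) ≤ (⌈R / s⌉ : ℝ) := by
        calc (z i : ℝ) ≤ x i / s := by rw [le_div_iff₀ hs]; exact h1
        _ ≤ R / s := by gcongr; exact hxi.2
        _ ≤ (⌈R / s⌉ : ℝ) := Int.le_ceil _
      exact_mod_cast hle
  exact Set.Finite.subset (Set.Finite.pi fun i => Set.finite_Icc _ _) hsub

lemma card_iter {α δ : ℝ} {K : Set (EuclideanSpace ℝ (Fin n))} {R : ℝ}
    (hα : 0 < α) (hδ : 0 < δ) (hP : IsPorous α δ K) (hK : K ⊆ closedBall 0 R)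
    {k : ℕ} (hk : 0 < k) (hk2 : 2 * Real.sqrt n ≤ α * k) :
    ∀ m : ℕ, (idx K (δ / k ^ m)).ncard ≤ (k ^ n - 1) ^ m * (idx K δ).ncard := by
  have hk0 : (0 : ℝ) < (k : ℝ) := by exact_mod_cast hk
  intro m
  induction m with
  | zero => simp
  | succ m ih =>
    have hsm : (0 : ℝ) < δ / k ^ m := by positivity
    have hkm1 : (1 : ℝ) ≤ (k : ℝ) ^ m := one_le_pow₀ (by exact_mod_cast hk)
    have hsδ : δ / k ^ m < 2 * δ := by
      have : δ / k ^ m ≤ δ := by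
        rw [div_le_iff₀ (by positivity)]
        nlinarith
      linarith
    have hstep := card_step hα hP hk hk2 hsm hsδ
      (idx_finite hsm hK) (idx_finite (by positivity) hK)
    have heq : δ / (k : ℝ) ^ m / k = δ / k ^ (m + 1) := by
      rw [div_div, ← pow_succ]
    rw [heq] at hstep
    calc (idx K (δ / k ^ (m + 1))).ncard ≤ (k ^ n - 1) * (idx K (δ / k ^ m)).ncard := hstep
    _ ≤ (k ^ n - 1) * ((k ^ n - 1) ^ m * (idx K δ).ncard) := Nat.mul_le_mul_left _ ih
    _ = (k ^ n - 1) ^ (m + 1) * (idx K δ).ncard := by ring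

lemma volume_thickening_le {K : Set (EuclideanSpace ℝ (Fin n))} {s r : ℝ}
    (hs : 0 < s) (hrs : r ≤ s) (hf : (idx K s).Finite) :
    volume (thickening r K) ≤
      ((idx K s).ncard : ℝ≥0∞) * ENNReal.ofReal ((3 * s) ^ n) := by
  classical
  set bigbox : (Fin n → ℤ) → Set (EuclideanSpace ℝ (Fin n)) :=
    fun z => box (fun i => ((z i : ℝ) - 1) * s) (fun i => ((z i : ℝ) + 2) * s) with hbb
  have hcover : thickening r K ⊆ ⋃ z ∈ hf.toFinset, bigbox z := by
    intro x hx
    obtain ⟨p, hpK, hpx⟩ := Metric.mem_thickening_iff.1 hx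
    have hd : ∀ i, |x i - p i| < s := by
      intro i
      have h1 := coord_le_norm (x - p) i
      have h2 : ‖x - p‖ < s := lt_of_lt_of_le (by rwa [← dist_eq_norm]) hrs
      have h3 : (x - p) i = x i - p i := rfl
      rw [h3] at h1; linarith
    set z : Fin n → ℤ := fun i => ⌊p i / s⌋ with hz
    have hzidx : z ∈ hf.toFinset := by
      rw [Set.Finite.mem_toFinset]; exact ⟨p, self_mem_cube hs p, hpK⟩
    refine Set.mem_biUnion hzidx ?_
    intro i
    obtain ⟨h1, h2⟩ := self_mem_cube hs p i
    have h3 := hd i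
    rw [abs_lt] at h3
    dsimp only at *
    constructor <;> nlinarith
  have hvol : ∀ z : Fin n → ℤ, volume (bigbox z) = ENNReal.ofReal ((3 * s) ^ n) := by
    intro z
    rw [hbb, volume_box]
    have : ∀ i : Fin n, ((z i : ℝ) + 2) * s - ((z i : ℝ) - 1) * s = 3 * s := fun i => by ring
    simp only [this]
    rw [Finset.prod_const, Finset.card_univ, Fintype.card_fin,
      ← ENNReal.ofReal_pow (by positivity)]
  calc volume (thickening r K) ≤ volume (⋃ z ∈ hf.toFinset, bigbox z) := measure_mono hcover
  _ ≤ ∑ z ∈ hf.toFinset, volume (bigbox z) := measure_biUnion_finset_le _ _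
  _ = hf.toFinset.card • ENNReal.ofReal ((3 * s) ^ n) := by
      rw [Finset.sum_congr rfl fun z _ => hvol z, Finset.sum_const]
  _ = ((idx K s).ncard : ℝ≥0∞) * ENNReal.ofReal ((3 * s) ^ n) := by
      rw [Set.ncard_eq_toFinset_card _ hf, nsmul_eq_mul]


lemma geom_id {κ γ e δ : ℝ} (hκ : 0 < κ) (hδ : 0 < δ) (m : ℕ) :
    (κ ^ γ) ^ m * (δ / κ ^ m) ^ e = δ ^ e * (κ ^ (γ - e)) ^ m := by
  have hκm : (0 : ℝ) < κ ^ m := by positivity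
  have e1 : ((κ ^ γ : ℝ)) ^ m = κ ^ (γ * (m : ℝ)) := by
    rw [← Real.rpow_natCast (κ ^ γ) m, ← Real.rpow_mul hκ.le]
  have e2 : ((κ : ℝ) ^ m) ^ e = κ ^ ((m : ℝ) * e) := by
    rw [← Real.rpow_natCast κ m, ← Real.rpow_mul hκ.le]
  have e3 : ((κ ^ (γ - e) : ℝ)) ^ m = κ ^ ((γ - e) * (m : ℝ)) := by
    rw [← Real.rpow_natCast (κ ^ (γ - e)) m, ← Real.rpow_mul hκ.le]
  rw [Real.div_rpow hδ.le hκm.le, e1, e2, e3]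
  have e4 : κ ^ ((γ - e) * (m : ℝ)) * κ ^ ((m : ℝ) * e) = κ ^ (γ * (m : ℝ)) := by
    rw [← Real.rpow_add hκ]; ring_nf
  have hne : κ ^ ((m : ℝ) * e) ≠ 0 := by positivity
  field_simp
  rw [← e4]; ring

end PorousAux

open PorousAux Filter


set_option maxHeartbeats 1000000 in
/-- A bounded `(α,δ)`-porous set `K ⊂ ℝⁿ` satisfies `Lⁿ((K)_r) ≤ C r^{n-γ}` for all
`r ∈ (0, diam K)`, for some constants `C > 0` and `γ < n`; in particular
its Hausdorff dimension is at most `γ < n`. -/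
theorem porous_neighborhood_volume_bound {n : ℕ} (α δ : ℝ)
    (hα : α ∈ Set.Ioo 0 (1 / 2 : ℝ)) (hδ : 0 < δ)
    (K : Set (EuclideanSpace ℝ (Fin n))) (hK : Bornology.IsBounded K)
    (hP : IsPorous α δ K) :
    ∃ C : ℝ, 0 < C ∧ ∃ γ : ℝ, γ < n ∧
      (∀ r : ℝ, 0 < r → r < Metric.diam K →
        volume (Metric.thickening r K) ≤ ENNReal.ofReal (C * r ^ ((n : ℝ) - γ))) ∧
      dimH K ≤ ENNReal.ofReal γ := by
  classical
  obtain ⟨hα0, hα2⟩ := hα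
  rcases Nat.eq_zero_or_pos n with hn | hn0
  · subst hn
    refine ⟨1, one_pos, -1, by norm_num, fun r hr hrd => absurd hrd (by
        rw [Metric.diam_subsingleton (Set.subsingleton_of_subsingleton)]; linarith), ?_⟩
    have h0 : dimH K = 0 := Set.Subsingleton.dimH_zero Set.subsingleton_of_subsingleton
    simp [h0]
  -- main case
  have hn0' : (0 : ℝ) < n := by exact_mod_cast hn0
  set k : ℕ := ⌈2 * Real.sqrt n / α⌉₊ + 2 with hkdef
  have hk : 0 < k := by omega
  have hκ2 : (2 : ℝ) ≤ (k : ℝ) := by exact_mod_cast (by omega : 2 ≤ k)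
  have hκ1 : (1 : ℝ) < (k : ℝ) := by linarith
  have hκ0 : (0 : ℝ) < (k : ℝ) := by linarith
  have hk2 : 2 * Real.sqrt n ≤ α * k := by
    have h1 : 2 * Real.sqrt n / α ≤ (⌈2 * Real.sqrt n / α⌉₊ : ℝ) := Nat.le_ceil _
    have h2 : ((⌈2 * Real.sqrt n / α⌉₊ : ℕ) : ℝ) ≤ (k : ℝ) := by
      exact_mod_cast (by omega : ⌈2 * Real.sqrt n / α⌉₊ ≤ k)
    rw [div_le_iff₀ hα0] at h1
    nlinarith
  have hκn2 : (2 : ℝ) ≤ (k : ℝ) ^ n := le_trans hκ2 (le_self_pow₀ (by linarith) (by omega))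
  have hB1 : (1 : ℝ) ≤ (k : ℝ) ^ n - 1 := by linarith
  set γ : ℝ := Real.logb k ((k : ℝ) ^ n - 1) with hγdef
  have hγn : γ < n := by
    have h1 : Real.logb k ((k : ℝ) ^ n - 1) < Real.logb k ((k : ℝ) ^ n) :=
      Real.logb_lt_logb hκ1 (by linarith) (by linarith)
    have h2 : Real.logb k ((k : ℝ) ^ n) = n := by
      rw [← Real.rpow_natCast (k : ℝ) n, Real.logb_rpow hκ0 (ne_of_gt hκ1)]
    linarith
  have hγ0 : 0 ≤ γ := Real.logb_nonneg hκ1 hB1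
  have hεpos : (0 : ℝ) < (n : ℝ) - γ := by linarith
  have hkey : (k : ℝ) ^ γ = (k : ℝ) ^ n - 1 :=
    Real.rpow_logb hκ0 (ne_of_gt hκ1) (by linarith)
  obtain ⟨R, hR⟩ := (Metric.isBounded_iff_subset_closedBall 0).1 hK
  set N0 : ℕ := (idx K δ).ncard with hN0
  have hiter := card_iter hα0 hδ hP hR hk hk2
  have hcast : ((k ^ n - 1 : ℕ) : ℝ) = (k : ℝ) ^ n - 1 := by
    have h1 : 1 ≤ k ^ n := Nat.one_le_pow _ _ hk
    rw [Nat.cast_sub h1, Nat.cast_pow, Nat.cast_one]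
  set C1 : ℝ := N0 * 3 ^ n * δ ^ ((n : ℝ)) * ((k : ℝ) / δ) ^ ((n : ℝ) - γ) with hC1
  have hC1nonneg : 0 ≤ C1 := by positivity
  -- small radii
  have hsmall : ∀ r : ℝ, 0 < r → r ≤ δ →
      volume (Metric.thickening r K) ≤ ENNReal.ofReal (C1 * r ^ ((n : ℝ) - γ)) := by
    intro r hr hrδ
    have hex : ∃ m : ℕ, δ < r * (k : ℝ) ^ (m + 1) := by
      obtain ⟨j, hj⟩ := pow_unbounded_of_one_lt (δ / r) hκ1
      refine ⟨j, ?_⟩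
      rw [div_lt_iff₀ hr] at hj
      have h5 : (k : ℝ) ^ j ≤ (k : ℝ) ^ (j + 1) := pow_le_pow_right₀ (by linarith) (by omega)
      nlinarith
    have hex2 : ∃ m : ℕ, r ≤ δ / (k : ℝ) ^ m ∧ δ < r * (k : ℝ) ^ (m + 1) := by
      refine ⟨Nat.find hex, ?_, Nat.find_spec hex⟩
      cases hfind : Nat.find hex with
      | zero => simpa using hrδ
      | succ j =>
        have hnot : ¬ δ < r * (k : ℝ) ^ (j + 1) := Nat.find_min hex (by omega)
        push_neg at hnot
        rw [le_div_iff₀ (by positivity)]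
        exact hnot
    obtain ⟨m, hm1, hm2⟩ := hex2
    have hs0 : (0 : ℝ) < δ / (k : ℝ) ^ m := by positivity
    have hvol := volume_thickening_le hs0 hm1 (idx_finite hs0 hR)
    refine le_trans hvol ?_
    rw [← ENNReal.ofReal_natCast, ← ENNReal.ofReal_mul (by positivity)]
    apply ENNReal.ofReal_le_ofReal
    have hcount : (((idx K (δ / (k : ℝ) ^ m)).ncard : ℕ) : ℝ) ≤ ((k : ℝ) ^ n - 1) ^ m * N0 := by
      have h1 := hiter m
      have h2 : (((k ^ n - 1) ^ m * (idx K δ).ncard : ℕ) : ℝ)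
          = ((k : ℝ) ^ n - 1) ^ m * N0 := by
        push_cast [hcast]; try ring
      exact h2 ▸ Nat.cast_le.mpr h1
    have hsn : (3 * (δ / (k : ℝ) ^ m)) ^ n = 3 ^ n * (δ / (k : ℝ) ^ m) ^ ((n : ℝ)) := by
      rw [mul_pow, ← Real.rpow_natCast (δ / (k : ℝ) ^ m) n]
    have hgeom : (((k : ℝ) ^ γ) ^ m) * (δ / (k : ℝ) ^ m) ^ ((n : ℝ)) =
        δ ^ ((n : ℝ)) * ((k : ℝ) ^ (γ - (n : ℝ))) ^ m := geom_id hκ0 hδ m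
    have hM : (0 : ℝ) < (k : ℝ) ^ m := by positivity
    have hMinv : ((k : ℝ) ^ m)⁻¹ ≤ (k : ℝ) * r / δ := by
      rw [inv_eq_one_div, div_le_div_iff₀ hM hδ]
      calc 1 * δ = δ := by ring
      _ ≤ (k : ℝ) * r * (k : ℝ) ^ m := by
          rw [pow_succ] at hm2; nlinarith
    have hsub : ((k : ℝ) ^ (γ - (n : ℝ))) ^ m = (((k : ℝ) ^ m)⁻¹) ^ ((n : ℝ) - γ) := by
      rw [Real.inv_rpow hM.le, ← Real.rpow_natCast ((k : ℝ) ^ (γ - (n : ℝ))) m,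
        ← Real.rpow_mul hκ0.le, ← Real.rpow_natCast (k : ℝ) m, ← Real.rpow_mul hκ0.le,
        ← Real.rpow_neg hκ0.le]
      ring_nf
    have hsplit : ((k : ℝ) * r / δ) ^ ((n : ℝ) - γ) =
        ((k : ℝ) / δ) ^ ((n : ℝ) - γ) * r ^ ((n : ℝ) - γ) := by
      rw [show (k : ℝ) * r / δ = ((k : ℝ) / δ) * r by ring,
        Real.mul_rpow (by positivity) hr.le]
    calc ((idx K (δ / (k : ℝ) ^ m)).ncard : ℝ) * (3 * (δ / (k : ℝ) ^ m)) ^ n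
        ≤ (((k : ℝ) ^ n - 1) ^ m * N0) * (3 ^ n * (δ / (k : ℝ) ^ m) ^ ((n : ℝ))) := by
          rw [hsn]; gcongr
    _ = (N0 : ℝ) * 3 ^ n * ((((k : ℝ) ^ γ) ^ m) * (δ / (k : ℝ) ^ m) ^ ((n : ℝ))) := by
          rw [hkey]; ring
    _ = (N0 : ℝ) * 3 ^ n * (δ ^ ((n : ℝ)) * ((k : ℝ) ^ (γ - (n : ℝ))) ^ m) := by rw [hgeom]
    _ = (N0 : ℝ) * 3 ^ n * (δ ^ ((n : ℝ)) * (((k : ℝ) ^ m)⁻¹) ^ ((n : ℝ) - γ)) := by rw [hsub]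
    _ ≤ (N0 : ℝ) * 3 ^ n * (δ ^ ((n : ℝ)) * ((k : ℝ) * r / δ) ^ ((n : ℝ) - γ)) := by
          gcongr
          all_goals first | exact hεpos.le | exact hMinv | positivity
    _ = C1 * r ^ ((n : ℝ) - γ) := by rw [hsplit, hC1]; ring
  -- Hausdorff dimension bound
  have hdimH : dimH K ≤ ENNReal.ofReal γ := by
    refine dimH_le fun d' hd' => ?_
    by_contra hcon
    rw [not_le] at hcon
    have hd'γ : γ < (d' : ℝ) := by
      rw [← ENNReal.ofReal_coe_nnreal] at hcon
      exact (ENNReal.ofReal_lt_ofReal_iff_of_nonneg hγ0).1 hcon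
    have hd'pos : 0 < (d' : ℝ) := lt_of_le_of_lt hγ0 hd'γ
    suffices hzero : μH[(d' : ℝ)] K = 0 by
      rw [hd'] at hzero
      exact (by simp : (⊤ : ℝ≥0∞) ≠ 0) hzero
    set q : ℝ := (k : ℝ) ^ (γ - (d' : ℝ)) with hq
    have hq0 : 0 ≤ q := Real.rpow_nonneg hκ0.le _
    have hq1 : q < 1 := Real.rpow_lt_one_of_one_lt_of_neg hκ1 (by linarith)
    set u : ℕ → ℝ := fun m =>
      ((N0 : ℝ) * (Real.sqrt n * δ) ^ ((d' : ℝ))) * q ^ m with hu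
    set t : ℕ → (Fin n → ℤ) → Set (EuclideanSpace ℝ (Fin n)) := fun m z =>
      if z ∈ idx K (δ / (k : ℝ) ^ m) then cube (δ / (k : ℝ) ^ m) z else ∅ with ht
    have hsm : ∀ m : ℕ, (0 : ℝ) < δ / (k : ℝ) ^ m := fun m => by positivity
    set ρ : ℕ → ℝ≥0∞ := fun m => ENNReal.ofReal (Real.sqrt n * (δ / (k : ℝ) ^ m)) with hρ
    have hρ0 : Filter.Tendsto ρ Filter.atTop (nhds 0) := by
      have h1 : Filter.Tendsto (fun m : ℕ => Real.sqrt n * (δ / (k : ℝ) ^ m))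
          Filter.atTop (nhds 0) := by
        have h2 : Filter.Tendsto (fun m : ℕ => ((k : ℝ)⁻¹) ^ m) Filter.atTop (nhds 0) :=
          tendsto_pow_atTop_nhds_zero_of_lt_one (by positivity)
            (by rw [inv_lt_one₀ hκ0]; exact hκ1)
        have h3 : (fun m : ℕ => Real.sqrt n * (δ / (k : ℝ) ^ m)) =
            fun m : ℕ => (Real.sqrt n * δ) * ((k : ℝ)⁻¹) ^ m := by
          funext m
          rw [inv_pow]
          field_simp
        rw [h3]
        simpa using h2.const_mul (Real.sqrt n * δ)
      have h4 := ENNReal.tendsto_ofReal h1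
      simpa only [ENNReal.ofReal_zero] using h4
    have hdiam : ∀ m z, EMetric.diam (t m z) ≤ ρ m := by
      intro m z
      rw [ht]
      dsimp only
      split_ifs with h
      · refine EMetric.diam_le fun x hx y hy => ?_
        rw [edist_dist]
        exact ENNReal.ofReal_le_ofReal (dist_le_of_mem_cube (hsm m) hx hy)
      · simp [EMetric.diam, Metric.ediam_empty]
    have hcov : ∀ m : ℕ, K ⊆ ⋃ z, t m z := by
      intro m x hx
      refine Set.mem_iUnion.2 ⟨fun i => ⌊x i / (δ / (k : ℝ) ^ m)⌋, ?_⟩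
      rw [ht]
      dsimp only
      rw [if_pos ⟨x, self_mem_cube (hsm m) x, hx⟩]
      exact self_mem_cube (hsm m) x
    have hmain := MeasureTheory.Measure.hausdorffMeasure_le_liminf_tsum (d' : ℝ) K ρ hρ0 t
      (Filter.Eventually.of_forall hdiam) (Filter.Eventually.of_forall hcov)
    have hsum : ∀ m : ℕ, (∑' z, EMetric.diam (t m z) ^ ((d' : ℝ))) ≤ ENNReal.ofReal (u m) := by
      intro m
      have hfm : (idx K (δ / (k : ℝ) ^ m)).Finite := idx_finite (hsm m) hR
      have hz : ∀ z ∉ hfm.toFinset, EMetric.diam (t m z) ^ ((d' : ℝ)) = 0 := by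
        intro z hzz
        rw [Set.Finite.mem_toFinset] at hzz
        rw [ht]
        dsimp only
        rw [if_neg hzz]
        simp [EMetric.diam, Metric.ediam_empty, ENNReal.zero_rpow_of_pos hd'pos, hd'pos]
      rw [tsum_eq_sum hz]
      have hterm : ∀ z ∈ hfm.toFinset, EMetric.diam (t m z) ^ ((d' : ℝ)) ≤ (ρ m) ^ ((d' : ℝ)) :=
        fun z _ => ENNReal.rpow_le_rpow (hdiam m z) hd'pos.le
      refine le_trans (Finset.sum_le_card_nsmul _ _ _ hterm) ?_
      rw [← Set.ncard_eq_toFinset_card _ hfm, nsmul_eq_mul]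
      have hρpow : (ρ m) ^ ((d' : ℝ)) =
          ENNReal.ofReal ((Real.sqrt n * (δ / (k : ℝ) ^ m)) ^ ((d' : ℝ))) := by
        rw [hρ]
        dsimp only
        rw [← ENNReal.ofReal_rpow_of_pos (by positivity)]
      have hcount : (((idx K (δ / (k : ℝ) ^ m)).ncard : ℕ) : ℝ) ≤ ((k : ℝ) ^ n - 1) ^ m * N0 := by
        have h1 := hiter m
        have h2 : (((k ^ n - 1) ^ m * (idx K δ).ncard : ℕ) : ℝ)
            = ((k : ℝ) ^ n - 1) ^ m * N0 := by
          push_cast [hcast]; try ring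
        exact h2 ▸ Nat.cast_le.mpr h1
      rw [hρpow, ← ENNReal.ofReal_natCast, ← ENNReal.ofReal_mul (by positivity)]
      apply ENNReal.ofReal_le_ofReal
      have hrw : Real.sqrt n * (δ / (k : ℝ) ^ m) = (Real.sqrt n * δ) / (k : ℝ) ^ m := by ring
      have hgeom : (((k : ℝ) ^ γ) ^ m) * ((Real.sqrt n * δ) / (k : ℝ) ^ m) ^ ((d' : ℝ)) =
          (Real.sqrt n * δ) ^ ((d' : ℝ)) * ((k : ℝ) ^ (γ - (d' : ℝ))) ^ m :=
        geom_id hκ0 (by positivity) m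
      rw [hrw]
      calc ((idx K (δ / (k : ℝ) ^ m)).ncard : ℝ) * ((Real.sqrt n * δ) / (k : ℝ) ^ m) ^ ((d' : ℝ))
          ≤ (((k : ℝ) ^ n - 1) ^ m * N0) * ((Real.sqrt n * δ) / (k : ℝ) ^ m) ^ ((d' : ℝ)) := by
            gcongr
            all_goals try exact Real.rpow_nonneg (by positivity) _
      _ = (N0 : ℝ) * ((((k : ℝ) ^ γ) ^ m) * ((Real.sqrt n * δ) / (k : ℝ) ^ m) ^ ((d' : ℝ))) := by
            rw [hkey]; ring
      _ = u m := by rw [hgeom, hu, hq]; ring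
    have hlim : Filter.Tendsto (fun m => ENNReal.ofReal (u m)) Filter.atTop (nhds 0) := by
      have h1 : Filter.Tendsto u Filter.atTop (nhds 0) := by
        rw [hu]
        simpa using (tendsto_pow_atTop_nhds_zero_of_lt_one hq0 hq1).const_mul
          ((N0 : ℝ) * (Real.sqrt n * δ) ^ ((d' : ℝ)))
      simpa using ENNReal.tendsto_ofReal h1
    have hfin : μH[(d' : ℝ)] K ≤ 0 := by
      refine le_trans hmain (le_trans (Filter.liminf_le_liminf
        (Filter.Eventually.of_forall hsum)) ?_)
      rw [hlim.liminf_eq]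
    exact le_antisymm hfin zero_le
  -- assemble
  by_cases hKne : K.Nonempty
  · obtain ⟨x₀, hx₀⟩ := hKne
    set V : ℝ≥0∞ := volume (Metric.ball x₀ (2 * Metric.diam K)) with hV
    have hVlt : V ≠ ⊤ := measure_ball_lt_top.ne
    set C2 : ℝ := V.toReal / δ ^ ((n : ℝ) - γ) with hC2
    have hC2nonneg : 0 ≤ C2 := by positivity
    refine ⟨C1 + C2 + 1, by positivity, γ, hγn, fun r hr hrD => ?_, hdimH⟩
    rcases le_or_gt r δ with hrδ | hrδ
    · refine le_trans (hsmall r hr hrδ) (ENNReal.ofReal_le_ofReal ?_)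
      have : 0 ≤ r ^ ((n : ℝ) - γ) := Real.rpow_nonneg hr.le _
      nlinarith
    · have hsub : Metric.thickening r K ⊆ Metric.ball x₀ (2 * Metric.diam K) := by
        intro x hx
        obtain ⟨p, hpK, hpx⟩ := Metric.mem_thickening_iff.1 hx
        have h1 : dist p x₀ ≤ Metric.diam K := Metric.dist_le_diam_of_mem hK hpK hx₀
        have h2 : dist x x₀ ≤ dist x p + dist p x₀ := dist_triangle _ _ _
        rw [Metric.mem_ball]
        have : dist x p < r := hpx
        linarith
      have hstep : volume (Metric.thickening r K) ≤ ENNReal.ofReal V.toReal := by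
        rw [ENNReal.ofReal_toReal hVlt]
        exact measure_mono hsub
      refine le_trans hstep (ENNReal.ofReal_le_ofReal ?_)
      have hδr : δ ^ ((n : ℝ) - γ) ≤ r ^ ((n : ℝ) - γ) :=
        Real.rpow_le_rpow hδ.le hrδ.le hεpos.le
      have hδpow : 0 < δ ^ ((n : ℝ) - γ) := Real.rpow_pos_of_pos hδ _
      have h3 : V.toReal = C2 * δ ^ ((n : ℝ) - γ) := by
        rw [hC2]; field_simp
      have h4 : 0 ≤ r ^ ((n : ℝ) - γ) := Real.rpow_nonneg hr.le _
      have h5 : C2 * δ ^ ((n : ℝ) - γ) ≤ C2 * r ^ ((n : ℝ) - γ) := by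
        apply mul_le_mul_of_nonneg_left hδr hC2nonneg
      rw [h3]
      nlinarith
  · rw [Set.not_nonempty_iff_eq_empty] at hKne
    refine ⟨1, one_pos, γ, hγn, fun r hr hrD => ?_, hdimH⟩
    rw [hKne, Metric.diam_empty] at hrD
    linarith
end
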